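/- arXiv:2012.04688 — 3 statements merged into one kernel-verified Lean document; each statement's English description precedes it below -/
import Mathlib

section
/- Classical S-lemma: Let A, D ∈ ℝ^{n×n} be symmetric, b, e ∈ ℝⁿ, c, f ∈ ℝ, and suppose there exists z₀ ∈ ℝⁿ with z₀ᵀAz₀ + 2bᵀz₀ + c > 0. Then the implication (for all z ∈ ℝⁿ: zᵀAz + 2bᵀz + c ≥ 0 implies zᵀDz + 2eᵀz + f ≥ 0) holds if and only if there exists λ ≥ 0 such that the (n+1)×(n+1) symmetric block matrix with upper-left block D − λA, upper-right block e − λb, lower-left block (e − λb)ᵀ, and lower-right entry f − λc is positive semidefinite. -/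
open Matrix


/-- quadratic form of a matrix -/
def qf {m : Type*} [Fintype m] (M : Matrix m m ℝ) (x : m → ℝ) : ℝ := x ⬝ᵥ M *ᵥ x

lemma qf_expand {m : Type*} [Fintype m] (M : Matrix m m ℝ) (a r : ℝ) (u v : m → ℝ) :
    qf M (a • u + r • v) =
      a ^ 2 * qf M u + a * r * (u ⬝ᵥ M *ᵥ v + v ⬝ᵥ M *ᵥ u) + r ^ 2 * qf M v := by
  simp only [qf, mulVec_add, mulVec_smul, add_dotProduct, dotProduct_add, smul_dotProduct,
    dotProduct_smul, smul_eq_mul]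
  ring

lemma qf_smul {m : Type*} [Fintype m] (M : Matrix m m ℝ) (s : ℝ) (x : m → ℝ) :
    qf M (s • x) = s ^ 2 * qf M x := by
  simp only [qf, mulVec_smul, dotProduct_smul, smul_dotProduct, smul_eq_mul]
  ring

lemma qf_neg {m : Type*} [Fintype m] (M : Matrix m m ℝ) (x : m → ℝ) :
    qf M (-x) = qf M x := by
  have := qf_smul M (-1) x
  simpa using this

lemma qf_comb {m : Type*} [Fintype m] (M N : Matrix m m ℝ) (a r : ℝ) (x : m → ℝ) :
    qf (a • M + r • N) x = a * qf M x + r * qf N x := by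
  simp only [qf, add_mulVec, smul_mulVec, dotProduct_add, dotProduct_smul, smul_eq_mul]
lemma dines_core_aux {m : Type*} [Fintype m] (M N : Matrix m m ℝ) (x1 x2 : m → ℝ)
    (h11 : qf M x1 = 1) (h12 : qf N x1 = 0) (h21 : qf M x2 = 0) (h22 : qf N x2 = 1)
    (hb : 0 ≤ (x1 ⬝ᵥ M *ᵥ x2 + x2 ⬝ᵥ M *ᵥ x1) + (x1 ⬝ᵥ N *ᵥ x2 + x2 ⬝ᵥ N *ᵥ x1))
    (t : ℝ) (ht0 : 0 ≤ t) (ht1 : t ≤ 1) :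
    ∃ x, qf M x = t ∧ qf N x = 1 - t := by
  set bM := x1 ⬝ᵥ M *ᵥ x2 + x2 ⬝ᵥ M *ᵥ x1 with hbM
  set bN := x1 ⬝ᵥ N *ᵥ x2 + x2 ⬝ᵥ N *ᵥ x1 with hbN
  set g : ℝ → ℝ := fun θ =>
    (1-θ)^2 + (1-θ)*θ*bM - t*((1-θ)^2 + θ^2 + (1-θ)*θ*(bM+bN)) with hg
  have hcont : ContinuousOn g (Set.Icc 0 1) := by fun_prop
  have hg1 : g 1 = -t := by simp [hg]
  have hg0 : g 0 = 1 - t := by simp [hg]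
  have h0 : (0:ℝ) ∈ Set.Icc (g 1) (g 0) := by
    rw [hg0, hg1]; exact ⟨by linarith, by linarith⟩
  obtain ⟨θ, hθmem, hθ⟩ := intermediate_value_Icc' (by norm_num : (0:ℝ) ≤ 1) hcont h0
  obtain ⟨hθ0, hθ1⟩ := hθmem
  set y := (1-θ) • x1 + θ • x2 with hy
  have hqM : qf M y = (1-θ)^2 + (1-θ)*θ*bM := by
    rw [hy, qf_expand, h11, h21, ← hbM]; ring
  have hqN : qf N y = (1-θ)*θ*bN + θ^2 := by
    rw [hy, qf_expand, h12, h22, ← hbN]; ring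
  have hSpos : 0 < qf M y + qf N y := by
    rw [hqM, hqN]
    nlinarith [sq_nonneg (1 - 2*θ), mul_nonneg (mul_nonneg (by linarith : (0:ℝ) ≤ 1-θ) hθ0) hb]
  have hMt : qf M y = t * (qf M y + qf N y) := by
    have : g θ = qf M y - t * (qf M y + qf N y) := by rw [hqM, hqN, hg]; ring
    rw [hθ] at this; linarith
  set s := qf M y + qf N y with hs
  refine ⟨Real.sqrt s⁻¹ • y, ?_, ?_⟩
  · rw [qf_smul, Real.sq_sqrt (by positivity), hMt]
    field_simp
  · rw [qf_smul, Real.sq_sqrt (by positivity)]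
    have : qf N y = (1 - t) * s := by rw [hs]; nlinarith [hMt]
    rw [this]; field_simp

lemma dines_core {m : Type*} [Fintype m] (M N : Matrix m m ℝ) (x1 x2 : m → ℝ)
    (h11 : qf M x1 = 1) (h12 : qf N x1 = 0) (h21 : qf M x2 = 0) (h22 : qf N x2 = 1)
    (t : ℝ) (ht0 : 0 ≤ t) (ht1 : t ≤ 1) :
    ∃ x, qf M x = t ∧ qf N x = 1 - t := by
  rcases le_or_gt 0 ((x1 ⬝ᵥ M *ᵥ x2 + x2 ⬝ᵥ M *ᵥ x1) + (x1 ⬝ᵥ N *ᵥ x2 + x2 ⬝ᵥ N *ᵥ x1)) with h | h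
  · exact dines_core_aux M N x1 x2 h11 h12 h21 h22 h t ht0 ht1
  · refine dines_core_aux M N x1 (-x2) h11 h12 ?_ ?_ ?_ t ht0 ht1
    · rw [qf_neg]; exact h21
    · rw [qf_neg]; exact h22
    · simp only [mulVec_neg, dotProduct_neg, neg_dotProduct]
      linarith
lemma dines {m : Type*} [Fintype m] (M N : Matrix m m ℝ) (x1 x2 : m → ℝ)
    (t : ℝ) (ht0 : 0 ≤ t) (ht1 : t ≤ 1) :
    ∃ x, qf M x = t * qf M x1 + (1-t) * qf M x2 ∧
         qf N x = t * qf N x1 + (1-t) * qf N x2 := by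
  rcases eq_or_ne (qf M x1 * qf N x2 - qf N x1 * qf M x2) 0 with hd0 | hd0
  · -- degenerate case
    rcases eq_or_ne ((qf M x1, qf N x1)) ((0:ℝ), (0:ℝ)) with hp1 | hp1
    · rw [Prod.mk.injEq] at hp1
      obtain ⟨h1, h2⟩ := hp1
      refine ⟨Real.sqrt (1-t) • x2, ?_, ?_⟩ <;>
        rw [qf_smul, Real.sq_sqrt (by linarith : (0:ℝ) ≤ 1 - t)] <;>
        [rw [h1]; rw [h2]] <;> ring
    · have hex : ∃ s : ℝ, qf M x2 = s * qf M x1 ∧ qf N x2 = s * qf N x1 := by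
        rcases eq_or_ne (qf M x1) 0 with h110 | h110
        · have h120 : qf N x1 ≠ 0 := by
            intro h
            exact hp1 (by rw [Prod.mk.injEq]; exact ⟨h110, h⟩)
          refine ⟨qf N x2 / qf N x1, ?_, by field_simp⟩
          have hz : qf N x1 * qf M x2 = 0 := by rw [h110] at hd0; linarith
          rcases mul_eq_zero.mp hz with h | h
          · exact absurd h h120
          · rw [h, h110]; ring
        · refine ⟨qf M x2 / qf M x1, by field_simp, ?_⟩
          field_simp
          linarith [hd0]
      obtain ⟨s, hs1, hs2⟩ := hex
      rcases le_or_gt 0 (t + (1-t) * s) with hμ0 | hμ0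
      · refine ⟨Real.sqrt (t + (1-t) * s) • x1, ?_, ?_⟩ <;>
          rw [qf_smul, Real.sq_sqrt hμ0] <;>
          [linear_combination (-(1-t)) * hs1; linear_combination (-(1-t)) * hs2]
      · have hs0 : s < 0 := by nlinarith
        have hss : s ≠ 0 := ne_of_lt hs0
        have hμs : 0 ≤ (t + (1-t) * s) / s := by
          have h := div_nonneg (neg_nonneg.2 hμ0.le) (neg_nonneg.2 hs0.le)
          rwa [neg_div_neg_eq] at h
        have hcan : (t + (1-t) * s) / s * s = t + (1-t) * s := div_mul_cancel₀ _ hss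
        refine ⟨Real.sqrt ((t + (1-t) * s) / s) • x2, ?_, ?_⟩ <;>
          rw [qf_smul, Real.sq_sqrt hμs] <;>
          [linear_combination ((t + (1-t) * s) / s - (1-t)) * hs1 + qf M x1 * hcan;
           linear_combination ((t + (1-t) * s) / s - (1-t)) * hs2 + qf N x1 * hcan]
  · -- independent case
    have hd' : (qf M x1 * qf N x2 - qf N x1 * qf M x2) *
        (qf M x1 * qf N x2 - qf N x1 * qf M x2)⁻¹ = 1 := mul_inv_cancel₀ hd0
    obtain ⟨x, hx1, hx2⟩ :=
      dines_core
        (((qf M x1 * qf N x2 - qf N x1 * qf M x2)⁻¹ * qf N x2) • M +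
          ((qf M x1 * qf N x2 - qf N x1 * qf M x2)⁻¹ * (-(qf M x2))) • N)
        (((qf M x1 * qf N x2 - qf N x1 * qf M x2)⁻¹ * (-(qf N x1))) • M +
          ((qf M x1 * qf N x2 - qf N x1 * qf M x2)⁻¹ * (qf M x1)) • N) x1 x2
        (by rw [qf_comb]; linear_combination hd')
        (by rw [qf_comb]; ring)
        (by rw [qf_comb]; ring)
        (by rw [qf_comb]; linear_combination hd')
        t ht0 ht1
    rw [qf_comb] at hx1 hx2
    have E1 : qf N x2 * qf M x - qf M x2 * qf N x =
        (qf M x1 * qf N x2 - qf N x1 * qf M x2) * t := by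
      linear_combination (qf M x1 * qf N x2 - qf N x1 * qf M x2) * hx1 -
        (qf N x2 * qf M x - qf M x2 * qf N x) * hd'
    have E2 : -(qf N x1) * qf M x + qf M x1 * qf N x =
        (qf M x1 * qf N x2 - qf N x1 * qf M x2) * (1 - t) := by
      linear_combination (qf M x1 * qf N x2 - qf N x1 * qf M x2) * hx2 -
        (-(qf N x1) * qf M x + qf M x1 * qf N x) * hd'
    refine ⟨x, ?_, ?_⟩
    · linear_combination (qf M x1 * qf N x2 - qf N x1 * qf M x2)⁻¹ *
        (qf M x1 * E1 + qf M x2 * E2) -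
        (qf M x - (t * qf M x1 + (1-t) * qf M x2)) * hd'
    · linear_combination (qf M x1 * qf N x2 - qf N x1 * qf M x2)⁻¹ *
        (qf N x1 * E1 + qf N x2 * E2) -
        (qf N x - (t * qf N x1 + (1-t) * qf N x2)) * hd'
lemma homog_s_lemma {m : Type*} [Fintype m] (M N : Matrix m m ℝ)
    (H : ∀ x, 0 ≤ qf M x → 0 ≤ qf N x) (slater : ∃ x0, 0 < qf M x0) :
    ∃ lam : ℝ, 0 ≤ lam ∧ ∀ x, lam * qf M x ≤ qf N x := by
  obtain ⟨x0, hx0⟩ := slater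
  set T : Set ℝ := {d | ∃ y, qf M y = 1 ∧ qf N y = d} with hT
  have hne : T.Nonempty := by
    refine ⟨qf N (Real.sqrt (qf M x0)⁻¹ • x0), Real.sqrt (qf M x0)⁻¹ • x0, ?_, rfl⟩
    rw [qf_smul, Real.sq_sqrt (by positivity), inv_mul_cancel₀ (ne_of_gt hx0)]
  have hbdd : ∀ d ∈ T, (0:ℝ) ≤ d := by
    rintro d ⟨y, h1, h2⟩
    rw [← h2]
    exact H y (by rw [h1]; norm_num)
  refine ⟨sInf T, le_csInf hne hbdd, fun x => ?_⟩
  rcases lt_trichotomy (qf M x) 0 with hx | hx | hx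
  · -- hard case : qf M x < 0
    by_contra hcon
    push_neg at hcon
    have ha1 : (0:ℝ) < 1 - qf M x := by linarith
    have hδ : 0 < sInf T * qf M x - qf N x := by linarith
    have hε : 0 < (sInf T * qf M x - qf N x) / (2 * (-(qf M x))) :=
      div_pos hδ (by linarith)
    obtain ⟨d, hdT, hd⟩ := exists_lt_of_csInf_lt hne
      (by linarith : sInf T < sInf T + (sInf T * qf M x - qf N x) / (2 * (-(qf M x))))
    obtain ⟨y, hy1, hy2⟩ := hdT
    have hc0 : 0 < (1 - qf M x)⁻¹ := inv_pos.2 ha1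
    have h2 : (1 - qf M x)⁻¹ * (1 - qf M x) = 1 := inv_mul_cancel₀ (ne_of_gt ha1)
    have hc1 : (1 - qf M x)⁻¹ ≤ 1 := by nlinarith
    obtain ⟨z, hzM, hzN⟩ := dines M N x y ((1 - qf M x)⁻¹) hc0.le hc1
    rw [hy1] at hzM
    rw [hy2] at hzN
    have hzM0 : qf M z = 0 := by
      rw [hzM]; linear_combination (-1 : ℝ) * h2
    have hzN0 : 0 ≤ qf N z := H z (by rw [hzM0])
    rw [hzN] at hzN0
    -- derive contradiction
    have h1c : 1 - (1 - qf M x)⁻¹ = -(qf M x) * (1 - qf M x)⁻¹ := by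
      linear_combination (-1 : ℝ) * h2
    have hd' : (1 - (1 - qf M x)⁻¹) * d ≤ (1 - (1 - qf M x)⁻¹) *
        (sInf T + (sInf T * qf M x - qf N x) / (2 * (-(qf M x)))) := by
      apply mul_le_mul_of_nonneg_left hd.le
      nlinarith
    have hcancel : (sInf T * qf M x - qf N x) / (2 * (-(qf M x))) * (2 * (-(qf M x))) =
        sInf T * qf M x - qf N x :=
      div_mul_cancel₀ _ (ne_of_gt (by linarith : (0:ℝ) < 2 * -qf M x))
    have key : -(qf M x) * ((sInf T * qf M x - qf N x) / (2 * (-(qf M x)))) =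
        (sInf T * qf M x - qf N x) / 2 := by linarith [hcancel]
    have E : (1 - qf M x)⁻¹ * qf N x + (1 - (1 - qf M x)⁻¹) *
        (sInf T + (sInf T * qf M x - qf N x) / (2 * (-(qf M x)))) =
        -((1 - qf M x)⁻¹ * (sInf T * qf M x - qf N x)) / 2 := by
      linear_combination (sInf T + (sInf T * qf M x - qf N x) / (2 * (-(qf M x)))) * h1c +
        (1 - qf M x)⁻¹ * key
    linarith [hzN0, hd', E, mul_pos hc0 hδ]
  · have := H x (le_of_eq hx.symm)
    rw [hx]; linarith
  · -- qf M x > 0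
    have hmem : (qf M x)⁻¹ * qf N x ∈ T := by
      refine ⟨Real.sqrt (qf M x)⁻¹ • x, ?_, ?_⟩
      · rw [qf_smul, Real.sq_sqrt (by positivity), inv_mul_cancel₀ (ne_of_gt hx)]
      · rw [qf_smul, Real.sq_sqrt (by positivity)]
    have hle : sInf T ≤ (qf M x)⁻¹ * qf N x := csInf_le ⟨0, hbdd⟩ hmem
    have h3 : qf M x * sInf T ≤ qf M x * ((qf M x)⁻¹ * qf N x) :=
      mul_le_mul_of_nonneg_left hle hx.le
    rw [← mul_assoc, mul_inv_cancel₀ (ne_of_gt hx), one_mul] at h3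
    linarith
lemma qf_fromBlocks {n : ℕ} (M : Matrix (Fin n) (Fin n) ℝ) (u : Fin n → ℝ) (k : ℝ)
    (z : Fin n → ℝ) (t : ℝ) :
    qf (fromBlocks M (replicateCol Unit u) (replicateRow Unit u) (Matrix.of fun _ _ => k))
      (Sum.elim z (fun _ => t)) = z ⬝ᵥ M *ᵥ z + 2 * t * (u ⬝ᵥ z) + k * t ^ 2 := by
  rw [qf, fromBlocks_mulVec]
  simp only [Sum.elim_comp_inl, Sum.elim_comp_inr]
  rw [sumElim_dotProduct_sumElim]
  simp only [mulVec, dotProduct, replicateRow, replicateCol, Matrix.of_apply, Pi.add_apply, of_apply,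
    Finset.univ_unique, PUnit.default_eq_unit, Finset.sum_const, Finset.card_singleton,
    one_smul, smul_eq_mul, Finset.sum_add_distrib, Finset.mul_sum]
  rw [show (∑ x, z x * (∑ j, M x j * z j + u x * t)) =
      ∑ x, ((∑ j, z x * (M x j * z j)) + t * (u x * z x)) from
    Finset.sum_congr rfl fun i _ => by rw [mul_add, Finset.mul_sum]; ring]
  rw [Finset.sum_add_distrib, ← Finset.mul_sum, ← Finset.mul_sum]
  ring
lemma qf_sub_smul {m : Type*} [Fintype m] (M N : Matrix m m ℝ) (r : ℝ) (x : m → ℝ) :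
    qf (M - r • N) x = qf M x - r * qf N x := by
  simp only [qf, sub_mulVec, smul_mulVec, dotProduct_sub, dotProduct_smul, smul_eq_mul]

lemma coeff_nonneg (w l k s₀ : ℝ) (h : ∀ s : ℝ, s₀ ≤ s → 0 ≤ w * s ^ 2 + l * s + k) :
    0 ≤ w := by
  by_contra hw
  push_neg at hw
  set s := max s₀ (max 1 ((|l| + |k| + 1) / (-w))) with hs
  have hs0 : s₀ ≤ s := le_max_left _ _
  have hs1 : (1:ℝ) ≤ s := le_trans (le_max_left _ _) (le_max_right _ _)
  have hs2 : (|l| + |k| + 1) / (-w) ≤ s := le_trans (le_max_right _ _) (le_max_right _ _)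
  have h3 : |l| + |k| + 1 ≤ s * (-w) := by
    rw [div_le_iff₀ (by linarith)] at hs2; linarith
  have h4 := h s hs0
  nlinarith [le_abs_self l, neg_abs_le l, le_abs_self k, neg_abs_le k, abs_nonneg l,
    abs_nonneg k, mul_le_mul_of_nonneg_left h3 (by linarith : (0:ℝ) ≤ s),
    mul_le_mul_of_nonneg_right (le_abs_self l) (by linarith : (0:ℝ) ≤ s),
    mul_le_mul_of_nonneg_right (neg_abs_le l) (by linarith : (0:ℝ) ≤ s)]
lemma expand_affine {m : Type*} [Fintype m] (M : Matrix m m ℝ) (u v : m → ℝ) (s : ℝ) :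
    (u + s • v) ⬝ᵥ M *ᵥ (u + s • v) =
      u ⬝ᵥ M *ᵥ u + s * (u ⬝ᵥ M *ᵥ v + v ⬝ᵥ M *ᵥ u) + s ^ 2 * (v ⬝ᵥ M *ᵥ v) := by
  have h := qf_expand M 1 s u v
  simp only [qf, one_smul, one_pow, one_mul] at h
  linarith [h]

theorem classical_S_lemma {n : ℕ}
    (A D : Matrix (Fin n) (Fin n) ℝ) (hA : A.IsSymm) (hD : D.IsSymm)
    (b e : Fin n → ℝ) (c f : ℝ)
    (hslater : ∃ z₀ : Fin n → ℝ, 0 < z₀ ⬝ᵥ A.mulVec z₀ + 2 * (b ⬝ᵥ z₀) + c) :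
    (∀ z : Fin n → ℝ, 0 ≤ z ⬝ᵥ A.mulVec z + 2 * (b ⬝ᵥ z) + c →
        0 ≤ z ⬝ᵥ D.mulVec z + 2 * (e ⬝ᵥ z) + f) ↔
      ∃ lam : ℝ, 0 ≤ lam ∧
        (Matrix.fromBlocks (D - lam • A) (Matrix.replicateCol Unit (e - lam • b))
          (Matrix.replicateRow Unit (e - lam • b))
          (Matrix.of fun _ _ => f - lam * c)).PosSemidef := by
  obtain ⟨z₀, hz₀⟩ := hslater
  constructor
  · -- hard direction
    intro himp
    -- Step 1: recession cone property
    have step : ∀ (z : Fin n → ℝ) (s₀ : ℝ),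
        (∀ s : ℝ, s₀ ≤ s → 0 ≤ (z₀ + s • z) ⬝ᵥ A *ᵥ (z₀ + s • z) +
          2 * (b ⬝ᵥ (z₀ + s • z)) + c) → 0 ≤ z ⬝ᵥ D *ᵥ z := by
      intro z s₀ hcon
      apply coeff_nonneg _ (z₀ ⬝ᵥ D *ᵥ z + z ⬝ᵥ D *ᵥ z₀ + 2 * (e ⬝ᵥ z))
        (z₀ ⬝ᵥ D *ᵥ z₀ + 2 * (e ⬝ᵥ z₀) + f) s₀
      intro s hs
      have hexp := himp (z₀ + s • z) (hcon s hs)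
      rw [expand_affine, dotProduct_add, dotProduct_smul, smul_eq_mul] at hexp
      linarith [hexp]
    have hrec : ∀ z : Fin n → ℝ, 0 ≤ z ⬝ᵥ A *ᵥ z → 0 ≤ z ⬝ᵥ D *ᵥ z := by
      have half : ∀ z : Fin n → ℝ, z ⬝ᵥ A *ᵥ z = 0 →
          0 ≤ z₀ ⬝ᵥ A *ᵥ z + z ⬝ᵥ A *ᵥ z₀ + 2 * (b ⬝ᵥ z) → 0 ≤ z ⬝ᵥ D *ᵥ z := by
        intro z hz hL
        apply step z 0
        intro s hs
        rw [expand_affine, dotProduct_add, dotProduct_smul, smul_eq_mul, hz]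
        nlinarith [mul_nonneg hs hL]
      intro z hz
      rcases eq_or_lt_of_le hz with hz0 | hzpos
      · rcases le_or_gt 0 (z₀ ⬝ᵥ A *ᵥ z + z ⬝ᵥ A *ᵥ z₀ + 2 * (b ⬝ᵥ z)) with hL | hL
        · exact half z hz0.symm hL
        · have hnegA : (-z) ⬝ᵥ A *ᵥ (-z) = z ⬝ᵥ A *ᵥ z := by
            simp only [mulVec_neg, dotProduct_neg, neg_dotProduct, neg_neg]
          have hnegD : (-z) ⬝ᵥ D *ᵥ (-z) = z ⬝ᵥ D *ᵥ z := by
            simp only [mulVec_neg, dotProduct_neg, neg_dotProduct, neg_neg]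
          have hnegL : z₀ ⬝ᵥ A *ᵥ (-z) + (-z) ⬝ᵥ A *ᵥ z₀ + 2 * (b ⬝ᵥ (-z)) =
              -(z₀ ⬝ᵥ A *ᵥ z + z ⬝ᵥ A *ᵥ z₀ + 2 * (b ⬝ᵥ z)) := by
            simp only [mulVec_neg, dotProduct_neg, neg_dotProduct]
            ring
          have h := half (-z) (by rw [hnegA, ← hz0]) (by rw [hnegL]; linarith)
          rw [hnegD] at h
          exact h
      · apply step z ((|z₀ ⬝ᵥ A *ᵥ z + z ⬝ᵥ A *ᵥ z₀ + 2 * (b ⬝ᵥ z)| +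
          |z₀ ⬝ᵥ A *ᵥ z₀ + 2 * (b ⬝ᵥ z₀) + c|) / (z ⬝ᵥ A *ᵥ z) + 1)
        intro s hs
        have hs1 : (1:ℝ) ≤ s := by
          have : (0:ℝ) ≤ (|z₀ ⬝ᵥ A *ᵥ z + z ⬝ᵥ A *ᵥ z₀ + 2 * (b ⬝ᵥ z)| +
              |z₀ ⬝ᵥ A *ᵥ z₀ + 2 * (b ⬝ᵥ z₀) + c|) / (z ⬝ᵥ A *ᵥ z) := by positivity
          linarith
        have h6 : |z₀ ⬝ᵥ A *ᵥ z + z ⬝ᵥ A *ᵥ z₀ + 2 * (b ⬝ᵥ z)| +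
            |z₀ ⬝ᵥ A *ᵥ z₀ + 2 * (b ⬝ᵥ z₀) + c| ≤ (s - 1) * (z ⬝ᵥ A *ᵥ z) := by
          rw [← div_le_iff₀ hzpos]
          linarith
        rw [expand_affine, dotProduct_add, dotProduct_smul, smul_eq_mul]
        nlinarith [le_abs_self (z₀ ⬝ᵥ A *ᵥ z + z ⬝ᵥ A *ᵥ z₀ + 2 * (b ⬝ᵥ z)),
          neg_abs_le (z₀ ⬝ᵥ A *ᵥ z + z ⬝ᵥ A *ᵥ z₀ + 2 * (b ⬝ᵥ z)),
          le_abs_self (z₀ ⬝ᵥ A *ᵥ z₀ + 2 * (b ⬝ᵥ z₀) + c),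
          neg_abs_le (z₀ ⬝ᵥ A *ᵥ z₀ + 2 * (b ⬝ᵥ z₀) + c),
          mul_le_mul_of_nonneg_left h6 (by linarith : (0:ℝ) ≤ s),
          mul_pos hzpos (by linarith : (0:ℝ) < s)]
    -- Step 2: homogenized implication
    have H : ∀ x : Fin n ⊕ Unit → ℝ,
        0 ≤ qf (fromBlocks A (replicateCol Unit b) (replicateRow Unit b) (Matrix.of fun _ _ => c)) x →
        0 ≤ qf (fromBlocks D (replicateCol Unit e) (replicateRow Unit e) (Matrix.of fun _ _ => f)) x := by
      intro x hx
      have hxd : x = Sum.elim (x ∘ Sum.inl) (fun _ => x (Sum.inr ())) := by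
        funext i
        cases i with
        | inl j => rfl
        | inr u => cases u; rfl
      rw [hxd, qf_fromBlocks] at hx ⊢
      set z : Fin n → ℝ := x ∘ Sum.inl with hzdef
      set t : ℝ := x (Sum.inr ()) with htdef
      rcases eq_or_ne t 0 with ht | ht
      · rw [ht] at hx ⊢
        simp only [mul_zero, zero_mul, add_zero, ne_eq, OfNat.ofNat_ne_zero,
          not_false_eq_true, zero_pow, mul_comm] at hx ⊢
        have hx' : 0 ≤ z ⬝ᵥ A *ᵥ z := by linarith [hx]
        linarith [hrec z hx']
      · have ht2 : (0:ℝ) < t ^ 2 := by positivity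
        have e1 : (t⁻¹ • z) ⬝ᵥ A *ᵥ (t⁻¹ • z) + 2 * (b ⬝ᵥ (t⁻¹ • z)) + c =
            (t⁻¹) ^ 2 * (z ⬝ᵥ A *ᵥ z + 2 * t * (b ⬝ᵥ z) + c * t ^ 2) := by
          simp only [mulVec_smul, dotProduct_smul, smul_dotProduct, smul_eq_mul]
          field_simp
        have h1 : 0 ≤ (t⁻¹ • z) ⬝ᵥ A *ᵥ (t⁻¹ • z) + 2 * (b ⬝ᵥ (t⁻¹ • z)) + c := by
          rw [e1]
          exact mul_nonneg (by positivity) hx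
        have h2 := himp (t⁻¹ • z) h1
        have e2 : (t⁻¹ • z) ⬝ᵥ D *ᵥ (t⁻¹ • z) + 2 * (e ⬝ᵥ (t⁻¹ • z)) + f =
            (t⁻¹) ^ 2 * (z ⬝ᵥ D *ᵥ z + 2 * t * (e ⬝ᵥ z) + f * t ^ 2) := by
          simp only [mulVec_smul, dotProduct_smul, smul_dotProduct, smul_eq_mul]
          field_simp
        rw [e2] at h2
        have key := mul_nonneg (le_of_lt ht2) h2
        have e3 : t ^ 2 * (t⁻¹ ^ 2 * (z ⬝ᵥ D *ᵥ z + 2 * t * (e ⬝ᵥ z) + f * t ^ 2)) =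
            z ⬝ᵥ D *ᵥ z + 2 * t * (e ⬝ᵥ z) + f * t ^ 2 := by
          field_simp
        linarith [key, e3]
    have slater' : ∃ x : Fin n ⊕ Unit → ℝ,
        0 < qf (fromBlocks A (replicateCol Unit b) (replicateRow Unit b) (Matrix.of fun _ _ => c)) x := by
      refine ⟨Sum.elim z₀ (fun _ => 1), ?_⟩
      rw [qf_fromBlocks]
      nlinarith [hz₀]
    obtain ⟨lam, hlam0, hineq⟩ := homog_s_lemma _ _ H slater'
    have hmat : (Matrix.fromBlocks (D - lam • A) (Matrix.replicateCol Unit (e - lam • b))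
          (Matrix.replicateRow Unit (e - lam • b)) (Matrix.of fun _ _ => f - lam * c)) =
        fromBlocks D (replicateCol Unit e) (replicateRow Unit e) (Matrix.of fun _ _ => f) -
          lam • fromBlocks A (replicateCol Unit b) (replicateRow Unit b) (Matrix.of fun _ _ => c) := by
      ext i j
      rcases i with i | i <;> rcases j with j | j <;>
        simp [fromBlocks, replicateCol, replicateRow, Matrix.sub_apply, Matrix.smul_apply, smul_eq_mul]
    refine ⟨lam, hlam0, Matrix.PosSemidef.of_dotProduct_mulVec_nonneg ?_ fun v => ?_⟩
    · -- Hermitian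
      show _ᴴ = _
      rw [conjTranspose_eq_transpose_of_trivial, fromBlocks_transpose, transpose_replicateCol,
        transpose_replicateRow, transpose_sub, transpose_smul, hA.eq, hD.eq]
      congr 1
    · -- nonnegativity
      rw [star_trivial, hmat]
      have h := hineq v
      rw [show (fromBlocks D (replicateCol Unit e) (replicateRow Unit e) (Matrix.of fun _ _ => f) -
          lam • fromBlocks A (replicateCol Unit b) (replicateRow Unit b) (Matrix.of fun _ _ => c)) *ᵥ v =
          _ from rfl]
      have hq := qf_sub_smul (fromBlocks D (replicateCol Unit e) (replicateRow Unit e)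
        (Matrix.of fun _ _ => f)) (fromBlocks A (replicateCol Unit b) (replicateRow Unit b)
        (Matrix.of fun _ _ => c)) lam v
      rw [qf, qf, qf] at hq
      rw [hq]
      simp only [qf] at h
      linarith [h]
  · -- easy direction
    rintro ⟨lam, hlam0, hpsd⟩ z hz
    have h : 0 ≤ (Sum.elim z (fun _ => (1:ℝ))) ⬝ᵥ
        (Matrix.fromBlocks (D - lam • A) (Matrix.replicateCol Unit (e - lam • b))
          (Matrix.replicateRow Unit (e - lam • b))
          (Matrix.of fun _ _ => f - lam * c)) *ᵥ (Sum.elim z (fun _ => (1:ℝ))) :=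
      hpsd.dotProduct_mulVec_nonneg _
    have h' := qf_fromBlocks (D - lam • A) (e - lam • b) (f - lam * c) z 1
    rw [qf] at h'
    rw [h'] at h
    rw [sub_mulVec, smul_mulVec, dotProduct_sub, dotProduct_smul, sub_dotProduct,
      smul_dotProduct, smul_eq_mul, smul_eq_mul] at h
    nlinarith [h, mul_nonneg hlam0 hz]
end

section
/- Let d, v ∈ ℝⁿ and f ∈ ℝ. Then the (n+1)×(n+1) symmetric block matrix with upper-left block diag(d₁, …, dₙ), upper-right block v, lower-left block vᵀ, and lower-right entry f is positive semidefinite if and only if there exists t ∈ ℝⁿ such that f ≥ Σᵢ tᵢ and (vᵢ, tᵢ, dᵢ) ∈ Q for every i ∈ {1, …, n}. -/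
open Matrix

/-- The set `Q = {(x, y, z) ∈ ℝ³ : ‖(2x, y − z)‖₂ ≤ y + z}`. -/
def socQ : Set (ℝ × ℝ × ℝ) :=
  {p | Real.sqrt (4 * p.1 ^ 2 + (p.2.1 - p.2.2) ^ 2) ≤ p.2.1 + p.2.2}

lemma mem_socQ_iff {x y z : ℝ} :
    (x, y, z) ∈ socQ ↔ 0 ≤ y ∧ 0 ≤ z ∧ x ^ 2 ≤ y * z := by
  simp only [socQ, Set.mem_setOf_eq, Real.sqrt_le_iff]
  constructor
  · rintro ⟨h1, h2⟩
    have hxz : x ^ 2 ≤ y * z := by nlinarith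
    have hy : 0 ≤ y := by nlinarith [sq_nonneg x]
    have hz : 0 ≤ z := by nlinarith [sq_nonneg x]
    exact ⟨hy, hz, hxz⟩
  · rintro ⟨hy, hz, hxz⟩
    exact ⟨by linarith, by nlinarith⟩

lemma quad_eval {n : ℕ} (d v : Fin n → ℝ) (f : ℝ) (a : Fin n → ℝ) (s : ℝ) :
    star (Sum.elim a fun _ : Unit => s) ⬝ᵥ
      (Matrix.fromBlocks (Matrix.diagonal d) (Matrix.replicateCol Unit v)
        (Matrix.replicateRow Unit v) (Matrix.of fun _ _ => f)) *ᵥ (Sum.elim a fun _ : Unit => s)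
    = ∑ i, (d i * a i ^ 2 + 2 * s * (v i * a i)) + f * s ^ 2 := by
  have hs : star (Sum.elim a fun _ : Unit => s) = Sum.elim a fun _ : Unit => s := by simp
  rw [hs, fromBlocks_mulVec, sumElim_dotProduct_sumElim, Sum.elim_comp_inl, Sum.elim_comp_inr]
  have h1 : (diagonal d *ᵥ a + replicateCol Unit v *ᵥ fun _ => s) = fun i => d i * a i + v i * s := by
    funext i
    simp only [Pi.add_apply, mulVec_diagonal]
    simp [mulVec, dotProduct, Matrix.replicateCol_apply]
  have h2 : (replicateRow Unit v *ᵥ a + ((of fun _ _ => f : Matrix Unit Unit ℝ)) *ᵥ fun _ => s)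
      = fun _ : Unit => (∑ i, v i * a i) + f * s := by
    funext u; simp [mulVec, dotProduct, Matrix.replicateRow_apply]
  rw [h1, h2]
  simp only [dotProduct, Finset.univ_unique, Finset.sum_const, Finset.card_singleton, one_smul]
  rw [mul_add, Finset.mul_sum, ← add_assoc, ← Finset.sum_add_distrib]
  have h3 : ∀ i : Fin n, a i * (d i * a i + v i * s) + s * (v i * a i)
      = d i * a i ^ 2 + 2 * s * (v i * a i) := fun i => by ring
  simp only [h3]
  ring

theorem arrow_matrix_psd_iff_soc {n : ℕ} (d v : Fin n → ℝ) (f : ℝ) :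
    (Matrix.fromBlocks (Matrix.diagonal d) (Matrix.replicateCol Unit v)
        (Matrix.replicateRow Unit v) (Matrix.of fun _ _ => f)).PosSemidef ↔
      ∃ t : Fin n → ℝ, (∑ i, t i) ≤ f ∧ ∀ i : Fin n, (v i, t i, d i) ∈ socQ := by
  rw [posSemidef_iff_dotProduct_mulVec]
  constructor
  · rintro ⟨hH, hq⟩
    have hQ : ∀ (a : Fin n → ℝ) (s : ℝ),
        0 ≤ ∑ i, (d i * a i ^ 2 + 2 * s * (v i * a i)) + f * s ^ 2 := fun a s => by
      rw [← quad_eval d v f a s]; exact hq _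
    have hsingle : ∀ (i : Fin n) (c : ℝ), 0 ≤ d i * c ^ 2 + 2 * (v i * c) + f := by
      intro i c
      have h := hQ (Pi.single i c) 1
      rw [Finset.sum_eq_single i (fun j _ hj => by simp [Pi.single_apply, hj])
        (fun h => absurd (Finset.mem_univ i) h)] at h
      simpa using h
    have hd : ∀ i, 0 ≤ d i := by
      intro i
      have h := hQ (Pi.single i 1) 0
      rw [Finset.sum_eq_single i (fun j _ hj => by simp [Pi.single_apply, hj])
        (fun h => absurd (Finset.mem_univ i) h)] at h
      simpa using h
    have hv0 : ∀ i, d i = 0 → v i = 0 := by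
      intro i hdi
      by_contra hvi
      have h := hsingle i (-(f + 1) / (2 * v i))
      rw [hdi] at h
      have hc : v i * (-(f + 1) / (2 * v i)) = -(f + 1) / 2 := by
        field_simp
      rw [hc] at h
      linarith
    refine ⟨fun i => if d i = 0 then 0 else v i ^ 2 / d i, ?_, ?_⟩
    · have h := hQ (fun i => if d i = 0 then 0 else -(v i / d i)) 1
      have hc : ∑ i, (d i * (if d i = 0 then 0 else -(v i / d i)) ^ 2
          + 2 * 1 * (v i * (if d i = 0 then 0 else -(v i / d i))))
          = ∑ i, -(if d i = 0 then 0 else v i ^ 2 / d i) := by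
        refine Finset.sum_congr rfl fun i _ => ?_
        by_cases hdi : d i = 0
        · simp [hdi]
        · simp only [hdi, if_false]
          field_simp
          ring
      rw [hc, Finset.sum_neg_distrib] at h
      nlinarith
    · intro i
      rw [mem_socQ_iff]
      by_cases hdi : d i = 0
      · simp [hdi, hv0 i hdi]
      · have hdi' : 0 < d i := lt_of_le_of_ne (hd i) (Ne.symm hdi)
        simp only [hdi, if_false]
        refine ⟨div_nonneg (sq_nonneg _) (hd i), hd i, ?_⟩
        rw [div_mul_cancel₀ _ hdi]
  · rintro ⟨t, hsum, hmem⟩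
    have hm : ∀ i, 0 ≤ t i ∧ 0 ≤ d i ∧ v i ^ 2 ≤ t i * d i := fun i =>
      mem_socQ_iff.mp (hmem i)
    constructor
    · rw [isHermitian_fromBlocks_iff]
      refine ⟨isHermitian_diagonal _, ?_, ?_, ?_⟩
      · rw [conjTranspose_replicateCol]; simp
      · rw [conjTranspose_replicateRow]; simp
      · ext i j; simp [Matrix.conjTranspose_apply]
    · intro x
      have hx : x = Sum.elim (fun i => x (Sum.inl i)) (fun _ : Unit => x (Sum.inr ())) := by
        funext j
        rcases j with i | u
        · rfl
        · rfl
      rw [hx, quad_eval]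
      set a : Fin n → ℝ := fun i => x (Sum.inl i)
      set s : ℝ := x (Sum.inr ())
      have key : ∀ i : Fin n, 0 ≤ d i * a i ^ 2 + 2 * s * (v i * a i) + t i * s ^ 2 := by
        intro i
        obtain ⟨ht, hdi, hvt⟩ := hm i
        rcases eq_or_lt_of_le hdi with h0 | h0
        · have hv : v i = 0 := by
            have : v i ^ 2 ≤ 0 := by nlinarith
            nlinarith [sq_nonneg (v i)]
          rw [← h0, hv]
          have : 0 ≤ t i * s ^ 2 := mul_nonneg ht (sq_nonneg s)
          linarith
        · nlinarith [sq_nonneg (d i * a i + v i * s), mul_nonneg (sub_nonneg.2 hvt) (sq_nonneg s)]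
      have hpos : 0 ≤ ∑ i, (d i * a i ^ 2 + 2 * s * (v i * a i) + t i * s ^ 2) :=
        Finset.sum_nonneg fun i _ => key i
      have hsplit : ∑ i, (d i * a i ^ 2 + 2 * s * (v i * a i) + t i * s ^ 2)
          = ∑ i, (d i * a i ^ 2 + 2 * s * (v i * a i)) + (∑ i, t i) * s ^ 2 := by
        rw [Finset.sum_add_distrib, Finset.sum_mul]
      rw [hsplit] at hpos
      nlinarith [mul_le_mul_of_nonneg_right hsum (sq_nonneg s)]
end

section
/- Let γ > 0, let C ∈ ℝ^{N×N} be symmetric, let q ∈ ℝᴺ, and suppose S ∈ ℝ^{N×N} is invertible with SᵀS = diag(σ₁, …, σ_N) and SᵀCS = diag(τ₁, …, τ_N). Then the supremum of wᵀCw + 2qᵀw over all w ∈ ℝᴺ with ‖w‖₂ ≤ γ equals the infimum of Σᵢ tᵢ + γ²λ over all λ ≥ 0 and t ∈ ℝᴺ satisfying ((Sᵀq)ᵢ, tᵢ, λσᵢ − τᵢ) ∈ Q for every i ∈ {1, …, N}. -/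
open Matrix Filter Topology

lemma socQ_mem_iff (x y z : ℝ) :
    (x, y, z) ∈ socQ ↔ 0 ≤ y ∧ 0 ≤ z ∧ x ^ 2 ≤ y * z := by
  unfold socQ
  simp only [Set.mem_setOf_eq]
  rw [Real.sqrt_le_iff]
  constructor
  · rintro ⟨h1, h2⟩
    have hyz : 0 ≤ y * z := by nlinarith [sq_nonneg x]
    have hy : 0 ≤ y := by nlinarith [sq_nonneg x, sq_nonneg (y - z)]
    have hz : 0 ≤ z := by nlinarith [sq_nonneg x, sq_nonneg (y - z)]
    exact ⟨hy, hz, by nlinarith⟩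
  · rintro ⟨hy, hz, h⟩
    constructor
    · nlinarith
    · linarith


theorem core_duality {N : ℕ} (γ : ℝ) (hγ : 0 < γ) (α β : Fin N → ℝ) :
    sSup {val : ℝ | ∃ u : Fin N → ℝ, (∑ i, u i ^ 2) ≤ γ ^ 2 ∧
        val = ∑ i, (α i * u i ^ 2 + 2 * β i * u i)} =
      sInf {val : ℝ | ∃ (lam : ℝ) (t : Fin N → ℝ), 0 ≤ lam ∧
        (∀ i, 0 ≤ t i ∧ 0 ≤ lam - α i ∧ β i ^ 2 ≤ t i * (lam - α i)) ∧
        val = (∑ i, t i) + γ ^ 2 * lam} := by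
  set P : Set ℝ := {val : ℝ | ∃ u : Fin N → ℝ, (∑ i, u i ^ 2) ≤ γ ^ 2 ∧
        val = ∑ i, (α i * u i ^ 2 + 2 * β i * u i)} with hP
  set D : Set ℝ := {val : ℝ | ∃ (lam : ℝ) (t : Fin N → ℝ), 0 ≤ lam ∧
        (∀ i, 0 ≤ t i ∧ 0 ≤ lam - α i ∧ β i ^ 2 ≤ t i * (lam - α i)) ∧
        val = (∑ i, t i) + γ ^ 2 * lam} with hD
  -- weak duality
  have weak : ∀ p ∈ P, ∀ d ∈ D, p ≤ d := by
    rintro p ⟨u, hu, rfl⟩ d ⟨lam, t, hlam, hfeas, rfl⟩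
    have key : ∀ i, α i * u i ^ 2 + 2 * β i * u i ≤ t i + lam * u i ^ 2 := by
      intro i
      obtain ⟨ht, hla, hb⟩ := hfeas i
      rcases eq_or_lt_of_le hla with h | h
      · have hb0 : β i = 0 := by nlinarith [sq_nonneg (β i)]
        have h' : lam = α i := by linarith
        rw [hb0, h']
        nlinarith
      · nlinarith [sq_nonneg ((lam - α i) * u i - β i)]
    calc ∑ i, (α i * u i ^ 2 + 2 * β i * u i) ≤ ∑ i, (t i + lam * u i ^ 2) :=
          Finset.sum_le_sum fun i _ => key i
      _ = (∑ i, t i) + lam * ∑ i, u i ^ 2 := by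
          rw [Finset.sum_add_distrib, Finset.mul_sum]
      _ ≤ (∑ i, t i) + γ ^ 2 * lam := by nlinarith
  have h0P : (0 : ℝ) ∈ P := ⟨0, by simpa using by positivity, by simp⟩
  obtain ⟨Λ, hΛ0, hub, hmax⟩ : ∃ Λ : ℝ, 0 ≤ Λ ∧ (∀ i, α i ≤ Λ) ∧
      (0 < Λ → ∃ j, α j = Λ) := by
    rcases isEmpty_or_nonempty (Fin N) with he | hne
    · exact ⟨0, le_refl 0, fun i => (he.elim i), fun h => absurd h (lt_irrefl 0)⟩
    · obtain ⟨j, hj⟩ := Finite.exists_max α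
      refine ⟨max (α j) 0, le_max_right _ _, fun i => le_trans (hj i) (le_max_left _ _), ?_⟩
      intro hpos
      rcases le_or_gt (α j) 0 with h | h
      · simp [max_eq_right h] at hpos
      · exact ⟨j, (max_eq_left h.le).symm⟩
  have dmem : ∀ lam, Λ < lam → ((∑ i, β i ^ 2 / (lam - α i)) + γ ^ 2 * lam) ∈ D := by
    intro lam hlam
    refine ⟨lam, fun i => β i ^ 2 / (lam - α i), le_trans hΛ0 hlam.le, fun i => ?_, rfl⟩
    have hpos : 0 < lam - α i := by have := hub i; linarith
    refine ⟨by positivity, hpos.le, ?_⟩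
    rw [div_mul_cancel₀ _ hpos.ne']
  have hDne : D.Nonempty := ⟨_, dmem (Λ + 1) (by linarith)⟩
  have hPbdd : BddAbove P := by
    obtain ⟨d, hd⟩ := hDne
    exact ⟨d, fun p hp => weak p hp d hd⟩
  have hDbdd : BddBelow D := ⟨0, fun d hd => weak 0 h0P d hd⟩
  have hPne : P.Nonempty := ⟨0, h0P⟩
  have hle : sSup P ≤ sInf D :=
    csSup_le hPne fun p hp => le_csInf hDne fun d hd => weak p hp d hd
  set φ : ℝ → ℝ := fun lam => ∑ i, β i ^ 2 / (lam - α i) ^ 2 with hφ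
  by_cases hE : ∃ lam, Λ < lam ∧ φ lam = γ ^ 2
  · -- easy case
    obtain ⟨lam, hlam, heq⟩ := hE
    have hpos : ∀ i, 0 < lam - α i := fun i => by have := hub i; linarith
    set u : Fin N → ℝ := fun i => β i / (lam - α i) with hu
    have hsum : ∑ i, u i ^ 2 = γ ^ 2 := by
      rw [← heq]; exact Finset.sum_congr rfl fun i _ => by rw [hu, div_pow]
    have hfu : (∑ i, (α i * u i ^ 2 + 2 * β i * u i))
        = (∑ i, β i ^ 2 / (lam - α i)) + γ ^ 2 * lam := by
      have h2 : γ ^ 2 * lam = ∑ i, u i ^ 2 * lam := by rw [← hsum, Finset.sum_mul]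
      rw [h2, ← Finset.sum_add_distrib]
      refine Finset.sum_congr rfl fun i _ => ?_
      have h := (hpos i).ne'
      simp only [hu]
      field_simp
      ring
    have hPmem : ((∑ i, β i ^ 2 / (lam - α i)) + γ ^ 2 * lam) ∈ P :=
      ⟨u, le_of_eq hsum, hfu.symm⟩
    have h1 : sInf D ≤ (∑ i, β i ^ 2 / (lam - α i)) + γ ^ 2 * lam :=
      csInf_le hDbdd (dmem lam hlam)
    have h2 : (∑ i, β i ^ 2 / (lam - α i)) + γ ^ 2 * lam ≤ sSup P :=
      le_csSup hPbdd hPmem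
    linarith
  · -- hard case
    push_neg at hE
    have hlt : ∀ lam, Λ < lam → φ lam < γ ^ 2 := by
      intro lam hlam
      rcases lt_or_ge (φ lam) (γ ^ 2) with h | h
      · exact h
      exfalso
      obtain ⟨M, hM1, hM2⟩ : ∃ M : ℝ, lam < M ∧ φ M < γ ^ 2 := by
        refine ⟨max (lam + 1) (Λ + 1 + (∑ i, β i ^ 2) / γ ^ 2),
          lt_of_lt_of_le (by linarith) (le_max_left _ _), ?_⟩
        set M := max (lam + 1) (Λ + 1 + (∑ i, β i ^ 2) / γ ^ 2) with hM
        have hMΛ : Λ + 1 + (∑ i, β i ^ 2) / γ ^ 2 ≤ M := le_max_right _ _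
        have hB : 0 ≤ (∑ i, β i ^ 2) / γ ^ 2 := by positivity
        have hMΛ1 : Λ + 1 ≤ M := by linarith
        have hterm : ∀ i, β i ^ 2 / (M - α i) ^ 2 ≤ β i ^ 2 / (M - Λ) := by
          intro i
          have h1 : (1:ℝ) ≤ M - Λ := by linarith
          have h2 : M - Λ ≤ M - α i := by have := hub i; linarith
          have h3 : M - Λ ≤ (M - α i) ^ 2 := by nlinarith
          exact div_le_div_of_nonneg_left (sq_nonneg _) (by linarith) h3
        have hsum : φ M ≤ (∑ i, β i ^ 2) / (M - Λ) := by
          rw [show φ M = ∑ i, β i ^ 2 / (M - α i) ^ 2 from rfl, Finset.sum_div]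
          exact Finset.sum_le_sum fun i _ => hterm i
        have hlast : (∑ i, β i ^ 2) / (M - Λ) < γ ^ 2 := by
          rw [div_lt_iff₀ (by linarith : (0:ℝ) < M - Λ)]
          have h4 : (∑ i, β i ^ 2) / γ ^ 2 * γ ^ 2 = ∑ i, β i ^ 2 := by
            field_simp
          nlinarith [sq_nonneg γ]
        linarith
      have hcont : ContinuousOn φ (Set.Icc lam M) := by
        apply continuousOn_finset_sum
        intro i _
        apply ContinuousOn.div continuousOn_const
        · fun_prop
        · intro x hx
          have h1 : Λ < x := lt_of_lt_of_le hlam hx.1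
          have h2 : 0 < x - α i := by have := hub i; linarith
          positivity
      obtain ⟨c, hc, hcval⟩ := intermediate_value_Icc' hM1.le hcont ⟨hM2.le, h⟩
      exact hE c (lt_of_lt_of_le hlam hc.1) hcval
    -- β i = 0 whenever α i = Λ
    have hβ0 : ∀ i, α i = Λ → β i = 0 := by
      intro i hi
      by_contra hne
      have hβpos : 0 < β i ^ 2 := by positivity
      set ε := |β i| / γ with hε
      have hεpos : 0 < ε := by rw [hε]; positivity
      have h1 : φ (Λ + ε) < γ ^ 2 := hlt _ (by linarith)
      have hterm : β i ^ 2 / (Λ + ε - α i) ^ 2 = γ ^ 2 := by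
        have h2 : Λ + ε - α i = ε := by rw [hi]; ring
        rw [h2, hε, div_pow, sq_abs]
        field_simp
      have hle2 : β i ^ 2 / (Λ + ε - α i) ^ 2 ≤ φ (Λ + ε) :=
        Finset.single_le_sum (f := fun j => β j ^ 2 / (Λ + ε - α j) ^ 2)
          (fun j _ => by positivity) (Finset.mem_univ i)
      linarith [hterm ▸ hle2]
    -- the limit candidate
    set v : Fin N → ℝ := fun i => if α i = Λ then 0 else β i / (Λ - α i) with hv
    have hαlt : ∀ i, α i ≠ Λ → 0 < Λ - α i := by
      intro i hi
      have := hub i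
      cases' lt_or_eq_of_le this with h h
      · linarith
      · exact absurd h hi
    have hvterm : ∀ i, Tendsto (fun lam => β i ^ 2 / (lam - α i) ^ 2)
        (𝓝[>] Λ) (𝓝 (v i ^ 2)) := by
      intro i
      by_cases hi : α i = Λ
      · have hb := hβ0 i hi
        have : (fun lam : ℝ => β i ^ 2 / (lam - α i) ^ 2) = fun _ => 0 := by
          funext lam; rw [hb]; simp
        rw [this, hv]
        simp [hi]
      · have hne := (hαlt i hi).ne'
        have h1 : Tendsto (fun lam : ℝ => β i ^ 2 / (lam - α i) ^ 2) (𝓝 Λ)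
            (𝓝 (β i ^ 2 / (Λ - α i) ^ 2)) := by
          apply Tendsto.div tendsto_const_nhds
          · exact ((continuous_id.sub continuous_const).pow 2).tendsto Λ
          · positivity
        have h2 : v i ^ 2 = β i ^ 2 / (Λ - α i) ^ 2 := by
          rw [hv]; simp only [if_neg hi]; rw [div_pow]
        rw [h2]
        exact h1.mono_left nhdsWithin_le_nhds
    have hφtend : Tendsto φ (𝓝[>] Λ) (𝓝 (∑ i, v i ^ 2)) := by
      rw [hφ]
      exact tendsto_finset_sum _ fun i _ => hvterm i
    have hvfeas : ∑ i, v i ^ 2 ≤ γ ^ 2 :=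
      le_of_tendsto hφtend (eventually_mem_nhdsWithin.mono fun lam hl => (hlt lam hl).le)
    set dbar : ℝ := (∑ i, if α i = Λ then 0 else β i ^ 2 / (Λ - α i)) + γ ^ 2 * Λ with hdbar
    have hdterm : ∀ i, Tendsto (fun lam => β i ^ 2 / (lam - α i))
        (𝓝[>] Λ) (𝓝 (if α i = Λ then 0 else β i ^ 2 / (Λ - α i))) := by
      intro i
      by_cases hi : α i = Λ
      · have hb := hβ0 i hi
        have : (fun lam : ℝ => β i ^ 2 / (lam - α i)) = fun _ => 0 := by
          funext lam; rw [hb]; simp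
        rw [this, if_pos hi]
        exact tendsto_const_nhds
      · rw [if_neg hi]
        have hne := (hαlt i hi).ne'
        have h1 : Tendsto (fun lam : ℝ => β i ^ 2 / (lam - α i)) (𝓝 Λ)
            (𝓝 (β i ^ 2 / (Λ - α i))) := by
          apply Tendsto.div tendsto_const_nhds
          · exact (continuous_id.sub continuous_const).tendsto Λ
          · exact hne
        exact h1.mono_left nhdsWithin_le_nhds
    have hdtend : Tendsto (fun lam => (∑ i, β i ^ 2 / (lam - α i)) + γ ^ 2 * lam)
        (𝓝[>] Λ) (𝓝 dbar) := by
      rw [hdbar]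
      apply Tendsto.add
      · exact tendsto_finset_sum _ fun i _ => hdterm i
      · exact ((continuous_const.mul continuous_id).tendsto Λ).mono_left nhdsWithin_le_nhds
    have hinfled : sInf D ≤ dbar :=
      ge_of_tendsto hdtend (eventually_mem_nhdsWithin.mono fun lam hl =>
        csInf_le hDbdd (dmem lam hl))
    -- per-coordinate value identity for v
    have hfv : ∀ i, α i * v i ^ 2 + 2 * β i * v i
        = (if α i = Λ then 0 else β i ^ 2 / (Λ - α i)) + Λ * v i ^ 2 := by
      intro i
      by_cases hi : α i = Λ
      · have hb := hβ0 i hi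
        rw [hv]; simp [hi, hb]
      · have hne := (hαlt i hi).ne'
        rw [hv]; simp only [if_neg hi]
        field_simp
        ring
    have hfvsum : ∑ i, (α i * v i ^ 2 + 2 * β i * v i)
        = (∑ i, if α i = Λ then 0 else β i ^ 2 / (Λ - α i)) + Λ * ∑ i, v i ^ 2 := by
      rw [Finset.mul_sum, ← Finset.sum_add_distrib]
      exact Finset.sum_congr rfl fun i _ => hfv i
    -- construct a primal point with value dbar
    have hPd : dbar ∈ P := by
      rcases eq_or_lt_of_le hΛ0 with h0 | hpos
      · -- Λ = 0
        refine ⟨v, hvfeas, ?_⟩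
        rw [hfvsum, hdbar, ← h0]
        ring
      · -- Λ > 0 : augment along an eigendirection
        obtain ⟨j, hj⟩ := hmax hpos
        have hvj : v j = 0 := by rw [hv]; simp [hj]
        set s := Real.sqrt (γ ^ 2 - ∑ i, v i ^ 2) with hs
        have hs2 : s ^ 2 = γ ^ 2 - ∑ i, v i ^ 2 :=
          Real.sq_sqrt (by linarith)
        set u : Fin N → ℝ := Function.update v j s with hu
        have hsum1 : ∑ i, u i ^ 2 = γ ^ 2 := by
          rw [hu, ← Finset.add_sum_erase _ _ (Finset.mem_univ j)]
          have e1 : Function.update v j s j = s := Function.update_self j s v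
          have e2 : ∑ i ∈ Finset.univ.erase j, Function.update v j s i ^ 2
              = ∑ i ∈ Finset.univ.erase j, v i ^ 2 :=
            Finset.sum_congr rfl fun i hi => by
              rw [Function.update_of_ne (Finset.ne_of_mem_erase hi)]
          have e3 : ∑ i, v i ^ 2 = ∑ i ∈ Finset.univ.erase j, v i ^ 2 := by
            rw [← Finset.add_sum_erase _ _ (Finset.mem_univ j), hvj]
            simp
          rw [e1, e2, ← e3, hs2]
          ring
        refine ⟨u, le_of_eq hsum1, ?_⟩
        have hfu : ∑ i, (α i * u i ^ 2 + 2 * β i * u i)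
            = (α j * s ^ 2 + 2 * β j * s) + ∑ i, (α i * v i ^ 2 + 2 * β i * v i) := by
          rw [hu, ← Finset.add_sum_erase _ _ (Finset.mem_univ j)]
          have e1 : Function.update v j s j = s := Function.update_self j s v
          have e2 : ∑ i ∈ Finset.univ.erase j, (α i * Function.update v j s i ^ 2
              + 2 * β i * Function.update v j s i)
              = ∑ i ∈ Finset.univ.erase j, (α i * v i ^ 2 + 2 * β i * v i) :=
            Finset.sum_congr rfl fun i hi => by
              rw [Function.update_of_ne (Finset.ne_of_mem_erase hi)]
          have e3 : ∑ i, (α i * v i ^ 2 + 2 * β i * v i)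
              = ∑ i ∈ Finset.univ.erase j, (α i * v i ^ 2 + 2 * β i * v i) := by
            rw [← Finset.add_sum_erase _ _ (Finset.mem_univ j), hvj]
            simp
          rw [e1, e2, ← e3]
        rw [hfu, hfvsum, hdbar, hj, hβ0 j hj]
        have hΛs : Λ * s ^ 2 = Λ * γ ^ 2 - Λ * ∑ i, v i ^ 2 := by rw [hs2]; ring
        linarith [hΛs]
    have h2 : dbar ≤ sSup P := le_csSup hPbdd hPd
    linarith


theorem worst_case_quadratic_ball_eq_soc_value {N : ℕ} (γ : ℝ) (hγ : 0 < γ)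
    (C : Matrix (Fin N) (Fin N) ℝ) (hC : C.IsSymm) (q : Fin N → ℝ)
    (S : Matrix (Fin N) (Fin N) ℝ) (hS : IsUnit S)
    (σ τ : Fin N → ℝ)
    (hSS : Sᵀ * S = Matrix.diagonal σ)
    (hSC : Sᵀ * C * S = Matrix.diagonal τ) :
    sSup {val : ℝ | ∃ w : Fin N → ℝ, Real.sqrt (∑ i, w i ^ 2) ≤ γ ∧
        val = w ⬝ᵥ C.mulVec w + 2 * (q ⬝ᵥ w)} =
      sInf {val : ℝ | ∃ (lam : ℝ) (t : Fin N → ℝ), 0 ≤ lam ∧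
        (∀ i : Fin N, ((Sᵀ.mulVec q) i, t i, lam * σ i - τ i) ∈ socQ) ∧
        val = (∑ i, t i) + γ ^ 2 * lam} := by
  classical
  have hdet : IsUnit S.det := (Matrix.isUnit_iff_isUnit_det S).mp hS
  have hinv : S⁻¹ * S = 1 := Matrix.nonsing_inv_mul S hdet
  have hinv' : S * S⁻¹ = 1 := Matrix.mul_nonsing_inv S hdet
  have hdiag : ∀ i, σ i = ∑ k, S k i ^ 2 := by
    intro i
    have h : (Sᵀ * S) i i = Matrix.diagonal σ i i := by rw [hSS]
    simp only [Matrix.mul_apply, Matrix.transpose_apply, Matrix.diagonal_apply_eq] at h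
    rw [← h]
    exact Finset.sum_congr rfl fun k _ => (pow_two (S k i)).symm
  have hσpos : ∀ i, 0 < σ i := by
    intro i
    rcases (by rw [hdiag]; positivity : (0:ℝ) ≤ σ i).lt_or_eq with h | h
    · exact h
    exfalso
    have hcol : ∀ k, S k i = 0 := by
      intro k
      have h0 : ∑ k, S k i ^ 2 = 0 := by rw [← hdiag]; exact h.symm
      have h1 := (Finset.sum_eq_zero_iff_of_nonneg
        (fun k _ => sq_nonneg (S k i))).mp h0 k (Finset.mem_univ k)
      exact pow_eq_zero_iff (n := 2) (by norm_num) |>.mp h1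
    have hsv : S.mulVec (Pi.single i 1) = 0 := by
      funext k
      simp [Matrix.mulVec, dotProduct, Pi.single_apply, hcol]
    have hzero : (Pi.single i 1 : Fin N → ℝ) = 0 := by
      have h1 : (S⁻¹ * S).mulVec (Pi.single i 1)
          = S⁻¹.mulVec (S.mulVec (Pi.single i 1)) := (Matrix.mulVec_mulVec _ _ _).symm
      rw [hinv, hsv, Matrix.one_mulVec, Matrix.mulVec_zero] at h1
      exact h1
    have := congrFun hzero i
    simp at this
  have hσne : ∀ i, σ i ≠ 0 := fun i => (hσpos i).ne'
  have hsqσpos : ∀ i, 0 < Real.sqrt (σ i) := fun i => Real.sqrt_pos.mpr (hσpos i)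
  set b : Fin N → ℝ := Sᵀ.mulVec q with hb
  set α : Fin N → ℝ := fun i => τ i / σ i with hα
  set β : Fin N → ℝ := fun i => b i / Real.sqrt (σ i) with hβ
  -- quadratic form identity
  have quad : ∀ (M : Matrix (Fin N) (Fin N) ℝ) (v : Fin N → ℝ),
      (S.mulVec v) ⬝ᵥ (M.mulVec (S.mulVec v)) = v ⬝ᵥ ((Sᵀ * M * S).mulVec v) := by
    intro M v
    rw [Matrix.dotProduct_mulVec, Matrix.dotProduct_mulVec, Matrix.dotProduct_mulVec]
    congr 1
    rw [← Matrix.vecMul_transpose, Matrix.vecMul_vecMul, Matrix.vecMul_vecMul,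
      Matrix.mul_assoc]
  have diag_dot : ∀ (d v : Fin N → ℝ),
      v ⬝ᵥ ((Matrix.diagonal d).mulVec v) = ∑ i, d i * v i ^ 2 := by
    intro d v
    simp only [dotProduct, Matrix.mulVec_diagonal]
    exact Finset.sum_congr rfl fun i _ => by ring
  have norm_id : ∀ v : Fin N → ℝ, ∑ i, (S.mulVec v) i ^ 2 = ∑ i, σ i * v i ^ 2 := by
    intro v
    have h1 := quad 1 v
    rw [Matrix.mul_one, hSS, diag_dot] at h1
    rw [← h1]
    simp only [Matrix.one_mulVec, dotProduct]
    exact Finset.sum_congr rfl fun i _ => pow_two _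
  have quadC : ∀ v : Fin N → ℝ,
      (S.mulVec v) ⬝ᵥ (C.mulVec (S.mulVec v)) = ∑ i, τ i * v i ^ 2 := by
    intro v
    rw [quad C v, hSC, diag_dot]
  have lin_id : ∀ v : Fin N → ℝ, q ⬝ᵥ (S.mulVec v) = ∑ i, b i * v i := by
    intro v
    rw [Matrix.dotProduct_mulVec, ← Matrix.mulVec_transpose, hb]
    rfl
  -- the value identity for w = S v, u = sqrt σ * v
  have key : ∀ v : Fin N → ℝ,
      (S.mulVec v) ⬝ᵥ C.mulVec (S.mulVec v) + 2 * (q ⬝ᵥ (S.mulVec v))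
        = ∑ i, (α i * (Real.sqrt (σ i) * v i) ^ 2 + 2 * β i * (Real.sqrt (σ i) * v i)) := by
    intro v
    rw [quadC, lin_id, Finset.mul_sum, ← Finset.sum_add_distrib]
    refine Finset.sum_congr rfl fun i _ => ?_
    have h1 : Real.sqrt (σ i) ^ 2 = σ i := Real.sq_sqrt (hσpos i).le
    have h2 := (hsqσpos i).ne'
    have h3 := hσne i
    rw [hα, hβ]
    simp only
    rw [mul_pow, h1]
    field_simp
  have usq : ∀ v : Fin N → ℝ, ∑ i, (Real.sqrt (σ i) * v i) ^ 2 = ∑ i, σ i * v i ^ 2 := by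
    intro v
    refine Finset.sum_congr rfl fun i _ => ?_
    rw [mul_pow, Real.sq_sqrt (hσpos i).le]
  -- primal set equality
  have hPset : {val : ℝ | ∃ w : Fin N → ℝ, Real.sqrt (∑ i, w i ^ 2) ≤ γ ∧
        val = w ⬝ᵥ C.mulVec w + 2 * (q ⬝ᵥ w)}
      = {val : ℝ | ∃ u : Fin N → ℝ, (∑ i, u i ^ 2) ≤ γ ^ 2 ∧
        val = ∑ i, (α i * u i ^ 2 + 2 * β i * u i)} := by
    ext val
    simp only [Set.mem_setOf_eq]
    constructor
    · rintro ⟨w, hw, rfl⟩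
      set v : Fin N → ℝ := S⁻¹.mulVec w with hv
      have hwv : S.mulVec v = w := by
        rw [hv, Matrix.mulVec_mulVec, hinv', Matrix.one_mulVec]
      refine ⟨fun i => Real.sqrt (σ i) * v i, ?_, ?_⟩
      · rw [usq, ← norm_id, hwv]
        have hnn : (0:ℝ) ≤ ∑ i, w i ^ 2 := by positivity
        nlinarith [Real.sq_sqrt hnn, Real.sqrt_nonneg (∑ i, w i ^ 2)]
      · rw [← hwv, key]
    · rintro ⟨u, hu, rfl⟩
      set v : Fin N → ℝ := fun i => u i / Real.sqrt (σ i) with hv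
      have huv : ∀ i, Real.sqrt (σ i) * v i = u i := by
        intro i
        rw [hv, mul_comm]
        exact div_mul_cancel₀ _ (hsqσpos i).ne'
      refine ⟨S.mulVec v, ?_, ?_⟩
      · rw [Real.sqrt_le_iff]
        refine ⟨hγ.le, ?_⟩
        rw [norm_id, ← usq]
        calc ∑ i, (Real.sqrt (σ i) * v i) ^ 2 = ∑ i, u i ^ 2 :=
              Finset.sum_congr rfl fun i _ => by rw [huv i]
          _ ≤ γ ^ 2 := hu
      · rw [key]
        exact (Finset.sum_congr rfl fun i _ => by rw [huv i]).symm
  -- dual set equality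
  have hconstr : ∀ (lam ti : ℝ) (i : Fin N),
      (((Sᵀ.mulVec q) i, ti, lam * σ i - τ i) ∈ socQ) ↔
      (0 ≤ ti ∧ 0 ≤ lam - α i ∧ β i ^ 2 ≤ ti * (lam - α i)) := by
    intro lam ti i
    have hσ := hσpos i
    have heq1 : lam * σ i - τ i = σ i * (lam - α i) := by
      rw [hα]
      field_simp
    have hβ2 : β i ^ 2 = (Sᵀ.mulVec q) i ^ 2 / σ i := by
      rw [hβ]
      simp only
      rw [div_pow, Real.sq_sqrt hσ.le, hb]
    rw [socQ_mem_iff, heq1, ← hb]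
    constructor
    · rintro ⟨h1, h2, h3⟩
      refine ⟨h1, by nlinarith, ?_⟩
      rw [hβ2, div_le_iff₀ hσ, ← hb]
      nlinarith
    · rintro ⟨h1, h2, h3⟩
      refine ⟨h1, by nlinarith, ?_⟩
      rw [hβ2, div_le_iff₀ hσ, ← hb] at h3
      nlinarith
  have hDset : {val : ℝ | ∃ (lam : ℝ) (t : Fin N → ℝ), 0 ≤ lam ∧
        (∀ i : Fin N, ((Sᵀ.mulVec q) i, t i, lam * σ i - τ i) ∈ socQ) ∧
        val = (∑ i, t i) + γ ^ 2 * lam}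
      = {val : ℝ | ∃ (lam : ℝ) (t : Fin N → ℝ), 0 ≤ lam ∧
        (∀ i, 0 ≤ t i ∧ 0 ≤ lam - α i ∧ β i ^ 2 ≤ t i * (lam - α i)) ∧
        val = (∑ i, t i) + γ ^ 2 * lam} := by
    ext val
    simp only [Set.mem_setOf_eq]
    exact exists_congr fun lam => exists_congr fun t =>
      and_congr_right fun _ => and_congr_left fun _ =>
        forall_congr' fun i => hconstr lam (t i) i
  rw [hPset, hDset]
  exact core_duality γ hγ α β
end
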